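/- Let s_1 ≤ s_2 ≤ ... ≤ s_m be nonnegative reals and let F_1 ≤ F_2 ≤ ... ≤ F_m and F̂_1, ..., F̂_m be values in [0,1] with |F_i − F̂_i| < ε for all i. Define Rev = Σ_{i=1}^{m−1}(F_{i+1} − F_i)s_i + (1 − F_m)s_m and R̂ev the same expression with F̂ in place of F. Then |Rev − R̂ev| ≤ ε·s_m. -/

import Mathlib

lemma stmt17_aux (ε : ℝ) (s D : ℕ → ℝ) (hs1 : 0 ≤ s 1) :
    ∀ m, 1 ≤ m → (∀ i, 1 ≤ i → i < m → s i ≤ s (i + 1)) →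
      (∀ i, 1 ≤ i → i ≤ m → |D i| ≤ ε) →
      |(∑ i ∈ Finset.Ico 1 m, (D (i + 1) - D i) * s i) - D m * s m| ≤ ε * s m := by
  intro m hm
  induction m, hm using Nat.le_induction with
  | base =>
    intro _ hD
    simp only [Finset.Ico_self, Finset.sum_empty, zero_sub, abs_neg, abs_mul]
    rw [abs_of_nonneg hs1]
    exact mul_le_mul_of_nonneg_right (hD 1 le_rfl le_rfl) hs1
  | succ m hm ih =>
    intro hsm hD
    have h1 : ih (fun i h1 h2 => hsm i h1 (h2.trans (Nat.lt_succ_self m)))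
        (fun i h1 h2 => hD i h1 (h2.trans (Nat.le_succ m))) = _ := rfl
    have hsum := Finset.sum_Ico_succ_top hm (fun i => (D (i + 1) - D i) * s i)
    rw [hsum]
    have key : (∑ i ∈ Finset.Ico 1 m, (D (i + 1) - D i) * s i)
        + (D (m + 1) - D m) * s m - D (m + 1) * s (m + 1)
        = ((∑ i ∈ Finset.Ico 1 m, (D (i + 1) - D i) * s i) - D m * s m)
          - D (m + 1) * (s (m + 1) - s m) := by ring
    rw [key]
    have hmono : s m ≤ s (m + 1) := hsm m hm (Nat.lt_succ_self m)
    have hbound : |D (m + 1) * (s (m + 1) - s m)| ≤ ε * (s (m + 1) - s m) := by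
      rw [abs_mul, abs_of_nonneg (by linarith : (0:ℝ) ≤ s (m + 1) - s m)]
      exact mul_le_mul_of_nonneg_right (hD (m + 1) (by omega) le_rfl) (by linarith)
    calc |((∑ i ∈ Finset.Ico 1 m, (D (i + 1) - D i) * s i) - D m * s m)
          - D (m + 1) * (s (m + 1) - s m)|
        ≤ |(∑ i ∈ Finset.Ico 1 m, (D (i + 1) - D i) * s i) - D m * s m|
          + |D (m + 1) * (s (m + 1) - s m)| := abs_sub _ _
      _ ≤ ε * s m + ε * (s (m + 1) - s m) := by
          exact add_le_add (ih (fun i h1 h2 => hsm i h1 (h2.trans (Nat.lt_succ_self m)))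
            (fun i h1 h2 => hD i h1 (h2.trans (Nat.le_succ m)))) hbound
      _ = ε * s (m + 1) := by ring

/-- Robustness of the revenue computed from estimated CDF values: if
`s_1 ≤ … ≤ s_m` are nonnegative payments, `F_1 ≤ … ≤ F_m` are CDF values and
`F̂_i` are estimates with `|F_i − F̂_i| < ε`, then the two revenue expressions
differ by at most `ε · s_m`. -/
theorem stmt17 (m : ℕ) (hm : 1 ≤ m) (ε : ℝ) (hε : 0 ≤ ε)
    (s F Fh : ℕ → ℝ)
    (hs1 : 0 ≤ s 1)
    (hsmono : ∀ i, 1 ≤ i → i < m → s i ≤ s (i + 1))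
    (hFmono : ∀ i, 1 ≤ i → i < m → F i ≤ F (i + 1))
    (hFrange : ∀ i, 1 ≤ i → i ≤ m → 0 ≤ F i ∧ F i ≤ 1)
    (hFhrange : ∀ i, 1 ≤ i → i ≤ m → 0 ≤ Fh i ∧ Fh i ≤ 1)
    (herr : ∀ i, 1 ≤ i → i ≤ m → |F i - Fh i| < ε) :
    |((∑ i ∈ Finset.Ico 1 m, (F (i + 1) - F i) * s i) + (1 - F m) * s m)
      - ((∑ i ∈ Finset.Ico 1 m, (Fh (i + 1) - Fh i) * s i)
          + (1 - Fh m) * s m)| ≤ ε * s m := by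
  have heq : ((∑ i ∈ Finset.Ico 1 m, (F (i + 1) - F i) * s i) + (1 - F m) * s m)
      - ((∑ i ∈ Finset.Ico 1 m, (Fh (i + 1) - Fh i) * s i) + (1 - Fh m) * s m)
      = (∑ i ∈ Finset.Ico 1 m, ((fun j => F j - Fh j) (i + 1) - (fun j => F j - Fh j) i) * s i)
        - (F m - Fh m) * s m := by
    have h2 : ∑ i ∈ Finset.Ico 1 m,
        ((fun j => F j - Fh j) (i + 1) - (fun j => F j - Fh j) i) * s i
        = (∑ i ∈ Finset.Ico 1 m, (F (i + 1) - F i) * s i)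
          - ∑ i ∈ Finset.Ico 1 m, (Fh (i + 1) - Fh i) * s i := by
      rw [← Finset.sum_sub_distrib]
      exact Finset.sum_congr rfl (fun i _ => by simp; ring)
    rw [h2]; ring
  rw [heq]
  exact stmt17_aux ε s (fun j => F j - Fh j) hs1 m hm hsmono
    (fun i h1 h2 => (herr i h1 h2).le)
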